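/- For SL_2 over a non-archimedean local field F, with b = 1, the elements w of the extended affine Weyl group (identified with chambers C_M^i of the standard apartment, where C_M^0 = C_M is the base chamber) for which the affine Deligne-Lusztig set X_w(σ) is nonempty are exactly C_M (i.e. i = 0) and C_M^i for i odd (both positive and negative). -/

import Mathlib

open Matrix

/-- The completion `L = 𝔽̄_p((t))` of the maximal unramified extension of the local
field `F = 𝔽_p((t))`. -/
abbrev Lfield (p : ℕ) [Fact p.Prime] : Type _ :=
  LaurentSeries (AlgebraicClosure (ZMod p))

/-- The uniformizer `π = t` of `L`. -/
noncomputable def unif (p : ℕ) [Fact p.Prime] : Lfield p :=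
  HahnSeries.single (1 : ℤ) 1

/-- `x` lies in the ring of integers `O_L = 𝔽̄_p[[t]]`. -/
def IsIntegral' (p : ℕ) [Fact p.Prime] (x : Lfield p) : Prop :=
  ∀ n : ℤ, n < 0 → x.coeff n = 0

/-- The standard Iwahori subgroup of `SL₂(L)`: determinant-one matrices with integral
entries whose lower-left entry lies in `π·O_L`. -/
def InIwahori (p : ℕ) [Fact p.Prime] (g : Matrix (Fin 2) (Fin 2) (Lfield p)) : Prop :=
  g.det = 1 ∧ (∀ i j, IsIntegral' p (g i j)) ∧ (∀ n : ℤ, n ≤ 0 → (g 1 0).coeff n = 0)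

open Classical in
/-- Representative in `SL₂(L)` of the element of the extended affine Weyl group
corresponding to the chamber `C_M^i` of the standard apartment: for even `i = 2k` the
translation `diag(π^k, π^(-k))`, and for odd `i = 2k - 1` the product of
`diag(π^k, π^(-k))` with the reflection `[[0,-1],[1,0]]` about the main vertex. -/
noncomputable def chamberRep (p : ℕ) [Fact p.Prime] (i : ℤ) :
    Matrix (Fin 2) (Fin 2) (Lfield p) :=
  if Even i then Matrix.diagonal ![unif p ^ (i / 2), unif p ^ (-(i / 2))]
  else Matrix.diagonal ![unif p ^ ((i + 1) / 2), unif p ^ (-((i + 1) / 2))] *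
    !![0, -1; 1, 0]

section ADLVAux

variable {p : ℕ} [Fact p.Prime]

/-- "the coefficients of `f` below `n` vanish", i.e. `v(f) ≥ n`. -/
def Vge (n : ℤ) (f : Lfield p) : Prop := ∀ m : ℤ, m < n → f.coeff m = 0

theorem Vge.mono {n n' : ℤ} {f : Lfield p} (h : Vge n f) (h' : n' ≤ n) : Vge n' f :=
  fun m hm => h m (lt_of_lt_of_le hm h')

theorem vge_zero (n : ℤ) : Vge n (0 : Lfield p) := fun m _ => HahnSeries.coeff_zero

theorem Vge.add {n : ℤ} {f g : Lfield p} (hf : Vge n f) (hg : Vge n g) : Vge n (f + g) :=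
  fun m hm => by rw [HahnSeries.coeff_add, hf m hm, hg m hm, add_zero]

theorem Vge.neg {n : ℤ} {f : Lfield p} (hf : Vge n f) : Vge n (-f) :=
  fun m hm => by rw [HahnSeries.coeff_neg, hf m hm, neg_zero]

theorem vge_single (n : ℤ) (c : AlgebraicClosure (ZMod p)) :
    Vge n (HahnSeries.single n c : Lfield p) :=
  fun m hm => HahnSeries.coeff_single_of_ne (ne_of_lt hm)

theorem Vge.mul {n m : ℤ} {f g : Lfield p} (hf : Vge n f) (hg : Vge m g) :
    Vge (n + m) (f * g) := by
  intro a ha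
  rw [HahnSeries.coeff_mul]
  refine Finset.sum_eq_zero fun ij hij => ?_
  rw [Finset.mem_addAntidiagonal] at hij
  obtain ⟨h1, h2, h3⟩ := hij
  by_cases h : ij.1 < n
  · rw [hf _ h, zero_mul]
  · have : ij.2 < m := by omega
    rw [hg _ this, mul_zero]

theorem coeff_mul_vge {n m : ℤ} {f g : Lfield p} (hf : Vge n f) (hg : Vge m g) :
    (f * g).coeff (n + m) = f.coeff n * g.coeff m := by
  have hf' : Vge (n + 1) (f - HahnSeries.single n (f.coeff n)) := by
    intro a ha
    rw [HahnSeries.coeff_sub]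
    rcases lt_or_eq_of_le (Int.lt_add_one_iff.mp ha) with h | h
    · rw [hf a h, HahnSeries.coeff_single_of_ne (ne_of_lt h), sub_zero]
    · rw [h, HahnSeries.coeff_single_same, sub_self]
  have hg' : Vge (m + 1) (g - HahnSeries.single m (g.coeff m)) := by
    intro a ha
    rw [HahnSeries.coeff_sub]
    rcases lt_or_eq_of_le (Int.lt_add_one_iff.mp ha) with h | h
    · rw [hg a h, HahnSeries.coeff_single_of_ne (ne_of_lt h), sub_zero]
    · rw [h, HahnSeries.coeff_single_same, sub_self]
  have key : f * g = HahnSeries.single n (f.coeff n) * HahnSeries.single m (g.coeff m)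
      + (HahnSeries.single n (f.coeff n) * (g - HahnSeries.single m (g.coeff m))
        + (f - HahnSeries.single n (f.coeff n)) * g) := by ring
  rw [key, HahnSeries.coeff_add, HahnSeries.coeff_add, HahnSeries.single_mul_single,
    HahnSeries.coeff_single_same]
  have h1 : ((HahnSeries.single n (f.coeff n) : Lfield p)
      * (g - HahnSeries.single m (g.coeff m))).coeff (n + m) = 0 :=
    ((vge_single n _).mul hg') (n + m) (by omega)
  have h2 : (((f - HahnSeries.single n (f.coeff n)) : Lfield p) * g).coeff (n + m) = 0 :=
    (hf'.mul hg) (n + m) (by omega)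
  rw [h1, h2]
  ring

theorem single_one_mul_single_one (a b : ℤ) :
    (HahnSeries.single a 1 : Lfield p) * HahnSeries.single b 1 = HahnSeries.single (a + b) 1 := by
  rw [HahnSeries.single_mul_single, one_mul]

theorem single_zero_one : (HahnSeries.single (0 : ℤ) 1 : Lfield p) = 1 := rfl

theorem single_add_single (n : ℤ) (c d : AlgebraicClosure (ZMod p)) :
    (HahnSeries.single n c : Lfield p) + HahnSeries.single n d = HahnSeries.single n (c + d) := by
  ext m
  rw [HahnSeries.coeff_add, HahnSeries.coeff_single, HahnSeries.coeff_single,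
    HahnSeries.coeff_single]
  split <;> simp

theorem unif_pow (n : ℕ) : unif p ^ n = HahnSeries.single (n : ℤ) 1 := by
  induction n with
  | zero => rw [pow_zero]; exact single_zero_one.symm
  | succ n ih =>
    rw [pow_succ, ih, unif, single_one_mul_single_one]
    norm_num

theorem unif_zpow (z : ℤ) : unif p ^ z = HahnSeries.single z 1 := by
  cases z with
  | ofNat n => rw [Int.ofNat_eq_natCast, zpow_natCast, unif_pow]
  | negSucc n =>
    rw [zpow_negSucc, unif_pow]
    refine inv_eq_of_mul_eq_one_left ?_
    rw [single_one_mul_single_one]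
    have h0 : Int.negSucc n + ((n + 1 : ℕ) : ℤ) = 0 := by rw [Int.negSucc_eq]; push_cast; ring
    rw [h0]
    exact single_zero_one

theorem vge_order (f : Lfield p) : Vge f.order f :=
  fun _ hm => HahnSeries.coeff_eq_zero_of_lt_order hm

section sigma

variable {σ : Lfield p ≃+* Lfield p}
variable (hσ : ∀ (x : Lfield p) (n : ℤ), (σ x).coeff n = x.coeff n ^ p)
include hσ

theorem Vge.sigma {n : ℤ} {f : Lfield p} (hf : Vge n f) : Vge n (σ f) := by
  intro m hm
  rw [hσ, hf m hm, zero_pow (Fact.out : p.Prime).ne_zero]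

theorem coeff_sigma_ne {f : Lfield p} {n : ℤ} (h : f.coeff n ≠ 0) : (σ f).coeff n ≠ 0 := by
  rw [hσ]; exact pow_ne_zero _ h

theorem sigma_single (n : ℤ) (c : AlgebraicClosure (ZMod p)) :
    σ (HahnSeries.single n c) = HahnSeries.single n (c ^ p) := by
  ext m
  rw [hσ, HahnSeries.coeff_single, HahnSeries.coeff_single]
  split
  · rfl
  · exact zero_pow (Fact.out : p.Prime).ne_zero

end sigma

theorem sigma_pow_succ_apply (σ : Lfield p ≃+* Lfield p) (m : ℕ) (y : Lfield p) :
    (σ ^ (m + 1)) y = σ ((σ ^ m) y) := by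
  rw [pow_succ']
  rfl

theorem Vge.sigma_pow {σ : Lfield p ≃+* Lfield p}
    (hσ : ∀ (x : Lfield p) (n : ℤ), (σ x).coeff n = x.coeff n ^ p)
    {n : ℤ} {f : Lfield p} (hf : Vge n f) (m : ℕ) : Vge n ((σ ^ m) f) := by
  induction m with
  | zero => simpa using hf
  | succ m ih =>
    rw [sigma_pow_succ_apply]
    exact ih.sigma hσ

theorem mul_ent (A B : Matrix (Fin 2) (Fin 2) (Lfield p)) (i j : Fin 2) :
    (A * B) i j = A i 0 * B 0 j + A i 1 * B 1 j := by
  rw [Matrix.mul_apply, Fin.sum_univ_two]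

theorem mmul (σ : Lfield p ≃+* Lfield p) (A B : Matrix (Fin 2) (Fin 2) (Lfield p)) :
    (A * B).map ⇑σ = A.map ⇑σ * B.map ⇑σ :=
  Matrix.map_mul (f := σ.toRingHom)

theorem InIwahori.vge0 {g : Matrix (Fin 2) (Fin 2) (Lfield p)} (h : InIwahori p g) (i j : Fin 2) :
    Vge 0 (g i j) := h.2.1 i j

theorem InIwahori.vge1 {g : Matrix (Fin 2) (Fin 2) (Lfield p)} (h : InIwahori p g) :
    Vge 1 (g 1 0) := fun m hm => h.2.2 m (by omega)

theorem InIwahori.coeff_mul_one {g : Matrix (Fin 2) (Fin 2) (Lfield p)} (h : InIwahori p g) :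
    (g 0 0).coeff 0 * (g 1 1).coeff 0 = 1 := by
  have hdet := h.1
  rw [Matrix.det_fin_two] at hdet
  have hc := congrArg (fun f : Lfield p => f.coeff 0) hdet
  simp only [HahnSeries.coeff_sub] at hc
  have e1 : (g 0 0 * g 1 1).coeff 0 = (g 0 0).coeff 0 * (g 1 1).coeff 0 := by
    have := coeff_mul_vge (h.vge0 0 0) (h.vge0 1 1)
    rwa [add_zero] at this
  have e2 : (g 0 1 * g 1 0).coeff 0 = 0 := ((h.vge0 0 1).mul h.vge1) 0 (by omega)
  have e3 : (1 : Lfield p).coeff 0 = 1 := by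
    rw [← single_zero_one, HahnSeries.coeff_single_same]
  rw [e1, e2, e3, sub_zero] at hc
  exact hc

theorem InIwahori.c00 {g : Matrix (Fin 2) (Fin 2) (Lfield p)} (h : InIwahori p g) :
    (g 0 0).coeff 0 ≠ 0 := left_ne_zero_of_mul_eq_one h.coeff_mul_one

theorem InIwahori.c11 {g : Matrix (Fin 2) (Fin 2) (Lfield p)} (h : InIwahori p g) :
    (g 1 1).coeff 0 ≠ 0 := right_ne_zero_of_mul_eq_one h.coeff_mul_one

theorem InIwahori.mul {g h : Matrix (Fin 2) (Fin 2) (Lfield p)}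
    (hg : InIwahori p g) (hh : InIwahori p h) : InIwahori p (g * h) := by
  refine ⟨by rw [Matrix.det_mul, hg.1, hh.1, one_mul], fun i j => ?_, fun n hn => ?_⟩
  · intro n hn
    rw [mul_ent]
    exact (((hg.vge0 i 0).mul (hh.vge0 0 j)).add ((hg.vge0 i 1).mul (hh.vge0 1 j))) n (by omega)
  · rw [mul_ent]
    refine (Vge.add (n := 1) ?_ ?_) n (by omega)
    · have := (hg.vge1).mul (hh.vge0 0 0); rwa [add_zero] at this
    · have := (hg.vge0 1 1).mul (hh.vge1); rwa [zero_add] at this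

theorem InIwahori_one : InIwahori p (1 : Matrix (Fin 2) (Fin 2) (Lfield p)) := by
  refine ⟨Matrix.det_one, fun i j n hn => ?_, fun n hn => ?_⟩
  · rw [Matrix.one_apply]
    split
    · rw [← single_zero_one, HahnSeries.coeff_single_of_ne (by omega)]
    · exact HahnSeries.coeff_zero
  · rw [Matrix.one_apply_ne (by decide : (1 : Fin 2) ≠ 0)]
    exact HahnSeries.coeff_zero

theorem InIwahori.map {g : Matrix (Fin 2) (Fin 2) (Lfield p)} (hg : InIwahori p g)
    {σ : Lfield p ≃+* Lfield p}
    (hσ : ∀ (x : Lfield p) (n : ℤ), (σ x).coeff n = x.coeff n ^ p) :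
    InIwahori p (g.map ⇑σ) := by
  refine ⟨?_, fun i j n hn => ?_, fun n hn => ?_⟩
  · have h1 : σ g.det = (g.map ⇑σ).det := RingHom.map_det σ.toRingHom g
    rw [← h1, hg.1]
    exact map_one _
  · rw [Matrix.map_apply, hσ, hg.2.1 i j n hn, zero_pow (Fact.out : p.Prime).ne_zero]
  · rw [Matrix.map_apply, hσ, hg.2.2 n hn, zero_pow (Fact.out : p.Prime).ne_zero]


theorem step {K B : ℤ} {t1 t2 t3 t4 s1 s2 : Lfield p}
    (hT1 : Vge (-K) t1) (hT2 : t1.coeff (-K) ≠ 0) (hT3 : Vge (-K) t2)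
    (hT4 : Vge (-K + 1) t3) (hT5 : Vge (-K + 1) t4)
    (hs1 : Vge B s1) (hs2 : s1.coeff B ≠ 0) (hs3 : Vge (B + 1) s2) :
    Vge (B - K) (t1 * s1 + t2 * s2) ∧ (t1 * s1 + t2 * s2).coeff (B - K) ≠ 0 ∧
      Vge (B - K + 1) (t3 * s1 + t4 * s2) := by
  have e1 : -K + B = B - K := by ring
  have h11 : Vge (B - K) (t1 * s1) := by have := hT1.mul hs1; rwa [e1] at this
  have h12 : Vge (B - K + 1) (t2 * s2) := by
    have := hT3.mul hs3; rwa [show -K + (B + 1) = B - K + 1 by ring] at this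
  refine ⟨h11.add (h12.mono (by omega)), ?_, ?_⟩
  · rw [HahnSeries.coeff_add, h12 (B - K) (by omega)]
    have hc := coeff_mul_vge hT1 hs1
    rw [e1] at hc
    rw [hc, add_zero]
    exact mul_ne_zero hT2 hs2
  · have h21 : Vge (B - K + 1) (t3 * s1) := by
      have := hT4.mul hs1; rwa [show -K + 1 + B = B - K + 1 by ring] at this
    have h22 : Vge (B - K + 1) (t4 * s2) :=
      (hT5.mul hs3).mono (by omega)
    exact h21.add h22

theorem growth (σ : Lfield p ≃+* Lfield p)
    (hσ : ∀ (x : Lfield p) (n : ℤ), (σ x).coeff n = x.coeff n ^ p)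
    (x gl S1 T : Matrix (Fin 2) (Fin 2) (Lfield p)) (j jb : Fin 2)
    (hj : (j = 0 ∧ jb = 1) ∨ (j = 1 ∧ jb = 0))
    (K : ℤ)
    (hE : x.map ⇑σ = x * gl * S1)
    (hT : S1 * gl.map ⇑σ = T)
    (hT1 : Vge (-K) (T j j)) (hT2 : (T j j).coeff (-K) ≠ 0) (hT3 : Vge (-K) (T j jb))
    (hT4 : Vge (-K + 1) (T jb j)) (hT5 : Vge (-K + 1) (T jb jb))
    (hS1 : Vge (-K) (S1 j j)) (hS2 : (S1 j j).coeff (-K) ≠ 0) (hS3 : Vge (-K + 1) (S1 jb j)) :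
    ∀ m : ℕ, ∃ S : Matrix (Fin 2) (Fin 2) (Lfield p),
      x.map ⇑(σ ^ (m + 1)) = x * gl * S ∧
      Vge (-(m + 1 : ℤ) * K) (S j j) ∧ (S j j).coeff (-(m + 1 : ℤ) * K) ≠ 0 ∧
      Vge (-(m + 1 : ℤ) * K + 1) (S jb j) := by
  intro m
  induction m with
  | zero =>
    have e : (-(((0 : ℕ) : ℤ) + 1)) * K = -K := by norm_num
    refine ⟨S1, by rw [pow_one]; exact hE, ?_, ?_, ?_⟩
    · rw [e]; exact hS1
    · rw [e]; exact hS2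
    · rw [e]; exact hS3
  | succ m ih =>
    obtain ⟨S, hSe, hSd, hSne, hSb⟩ := ih
    have hφ : x.map ⇑(σ ^ (m + 1 + 1)) = x * gl * (T * S.map ⇑σ) := by
      have hc : (⇑(σ ^ (m + 1 + 1)) : Lfield p → Lfield p) = ⇑σ ∘ ⇑(σ ^ (m + 1)) :=
        funext fun y => sigma_pow_succ_apply σ (m + 1) y
      calc x.map ⇑(σ ^ (m + 1 + 1)) = (x.map ⇑(σ ^ (m + 1))).map ⇑σ := by
            rw [Matrix.map_map, hc]
        _ = ((x * gl) * S).map ⇑σ := by rw [hSe]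
        _ = (x * gl).map ⇑σ * S.map ⇑σ := mmul σ _ _
        _ = (x.map ⇑σ * gl.map ⇑σ) * S.map ⇑σ := by rw [mmul σ x gl]
        _ = ((x * gl * S1) * gl.map ⇑σ) * S.map ⇑σ := by rw [hE]
        _ = (x * gl) * ((S1 * gl.map ⇑σ) * S.map ⇑σ) := by
            rw [mul_assoc (x * gl) S1 (gl.map ⇑σ), mul_assoc]
        _ = x * gl * (T * S.map ⇑σ) := by rw [hT]
    have hs1 : Vge (-(m + 1 : ℤ) * K) ((S.map ⇑σ) j j) := by
      rw [Matrix.map_apply]; exact hSd.sigma hσ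
    have hs2 : ((S.map ⇑σ) j j).coeff (-(m + 1 : ℤ) * K) ≠ 0 := by
      rw [Matrix.map_apply]; exact coeff_sigma_ne hσ hSne
    have hs3 : Vge (-(m + 1 : ℤ) * K + 1) ((S.map ⇑σ) jb j) := by
      rw [Matrix.map_apply]; exact hSb.sigma hσ
    have key := step hT1 hT2 hT3 hT4 hT5 hs1 hs2 hs3
    have hnew : Vge (-(m + 1 : ℤ) * K - K) ((T * S.map ⇑σ) j j) ∧
        ((T * S.map ⇑σ) j j).coeff (-(m + 1 : ℤ) * K - K) ≠ 0 ∧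
        Vge (-(m + 1 : ℤ) * K - K + 1) ((T * S.map ⇑σ) jb j) := by
      rcases hj with ⟨hj0, hjb1⟩ | ⟨hj1, hjb0⟩
      · subst hj0; subst hjb1
        rw [mul_ent T _ 0 0, mul_ent T _ 1 0]
        exact ⟨key.1, key.2.1, key.2.2⟩
      · subst hj1; subst hjb0
        rw [mul_ent T _ 1 1, mul_ent T _ 0 1]
        rw [add_comm (T 1 0 * (S.map ⇑σ) 0 1) (T 1 1 * (S.map ⇑σ) 1 1),
          add_comm (T 0 0 * (S.map ⇑σ) 0 1) (T 0 1 * (S.map ⇑σ) 1 1)]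
        exact ⟨key.1, key.2.1, key.2.2⟩
    have eB : (-(((m + 1 : ℕ) : ℤ) + 1)) * K = -(m + 1 : ℤ) * K - K := by push_cast; ring
    refine ⟨T * S.map ⇑σ, hφ, ?_, ?_, ?_⟩
    · rw [eB]; exact hnew.1
    · rw [eB]; exact hnew.2.1
    · rw [eB]; exact hnew.2.2

noncomputable def mOrd (M : Matrix (Fin 2) (Fin 2) (Lfield p)) : ℤ :=
  min (min (M 0 0).order (M 0 1).order) (min (M 1 0).order (M 1 1).order)

theorem vge_mOrd (M : Matrix (Fin 2) (Fin 2) (Lfield p)) (i j : Fin 2) :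
    Vge (mOrd M) (M i j) := by
  fin_cases i <;> fin_cases j <;> simp only [Fin.zero_eta, Fin.mk_one] <;>
    exact (vge_order _).mono (by unfold mOrd; omega)


theorem single_one_inv (a : ℤ) :
    (HahnSeries.single a 1 : Lfield p)⁻¹ = HahnSeries.single (-a) 1 := by
  refine inv_eq_of_mul_eq_one_right ?_
  rw [single_one_mul_single_one, add_neg_cancel]
  exact single_zero_one

theorem chamberRep_even' {i k : ℤ} (hik : i = 2 * k) :
    chamberRep p i = !![HahnSeries.single k 1, 0; 0, HahnSeries.single (-k) 1] := by
  have hi : Even i := ⟨k, by omega⟩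
  have h2 : i / 2 = k := by omega
  unfold chamberRep
  rw [if_pos hi, h2]
  ext a b
  fin_cases a <;> fin_cases b <;>
    simp [Matrix.diagonal, unif_zpow, single_one_inv, mul_neg_one]

theorem chamberRep_odd' {i k : ℤ} (hik : i = 2 * k - 1) :
    chamberRep p i = !![0, -HahnSeries.single k 1; HahnSeries.single (-k) 1, 0] := by
  have hi : ¬ Even i := by
    rintro ⟨t, ht⟩; omega
  have h2 : (i + 1) / 2 = k := by omega
  unfold chamberRep
  rw [if_neg hi, h2]
  ext a b
  fin_cases a <;> fin_cases b <;>
    simp [Matrix.mul_apply, Fin.sum_univ_two, Matrix.diagonal, unif_zpow, single_one_inv]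

theorem no_even (σ : Lfield p ≃+* Lfield p)
    (hσ : ∀ (x : Lfield p) (n : ℤ), (σ x).coeff n = x.coeff n ^ p)
    {i : ℤ} (hi : Even i) (hi0 : i ≠ 0)
    (x gl gr : Matrix (Fin 2) (Fin 2) (Lfield p)) (hx : x.det = 1)
    (hgl : InIwahori p gl) (hgr : InIwahori p gr)
    (heq : x⁻¹ * x.map ⇑σ = gl * chamberRep p i * gr) : False := by
  obtain ⟨t, ht⟩ := hi
  obtain ⟨k, hik⟩ : ∃ k : ℤ, i = 2 * k := ⟨t, by omega⟩
  have hk0 : k ≠ 0 := by omega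
  have hxu : IsUnit x.det := by rw [hx]; exact isUnit_one
  have hE0 : x.map ⇑σ = x * (gl * chamberRep p i * gr) := by
    calc x.map ⇑σ = (x * x⁻¹) * x.map ⇑σ := by rw [Matrix.mul_nonsing_inv x hxu, one_mul]
      _ = x * (x⁻¹ * x.map ⇑σ) := by rw [mul_assoc]
      _ = x * (gl * chamberRep p i * gr) := by rw [heq]
  set D : Matrix (Fin 2) (Fin 2) (Lfield p) :=
    !![HahnSeries.single k 1, 0; 0, HahnSeries.single (-k) 1] with hD
  have hrep : chamberRep p i = D := chamberRep_even' hik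
  have hE : x.map ⇑σ = x * gl * (D * gr) := by
    rw [hE0, hrep, mul_assoc gl D gr, ← mul_assoc x gl (D * gr)]
  set q := gr * gl.map ⇑σ with hqdef
  have hq : InIwahori p q := hgr.mul (hgl.map hσ)
  have hT : (D * gr) * gl.map ⇑σ = D * q := by rw [hqdef, mul_assoc]
  have hD0 : ∀ (A : Matrix (Fin 2) (Fin 2) (Lfield p)) (c : Fin 2),
      (D * A) 0 c = HahnSeries.single k 1 * A 0 c := by
    intro A c
    rw [mul_ent]
    simp [hD]
  have hD1 : ∀ (A : Matrix (Fin 2) (Fin 2) (Lfield p)) (c : Fin 2),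
      (D * A) 1 c = HahnSeries.single (-k) 1 * A 1 c := by
    intro A c
    rw [mul_ent]
    simp [hD]
  have hsv : ∀ (a n : ℤ) (f : Lfield p), Vge n f → Vge (a + n) (HahnSeries.single a 1 * f) :=
    fun a n f hf => (vge_single a 1).mul hf
  have hsc : ∀ (a n : ℤ) (f : Lfield p), Vge n f →
      (HahnSeries.single a 1 * f).coeff (a + n) = f.coeff n := by
    intro a n f hf
    rw [coeff_mul_vge (vge_single a 1) hf, HahnSeries.coeff_single_same, one_mul]
  have main : ∃ (j : Fin 2) (K : ℤ), 1 ≤ K ∧ ∀ m : ℕ, ∃ S,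
      x.map ⇑(σ ^ (m + 1)) = x * gl * S ∧ (S j j).coeff (-(m + 1 : ℤ) * K) ≠ 0 := by
    rcases lt_or_gt_of_ne hk0 with hneg | hpos
    · -- k ≤ -1 : take K = -k, track entry (0, 0)
      obtain ⟨K, rfl⟩ : ∃ K : ℤ, k = -K := ⟨-k, (neg_neg k).symm⟩
      rw [neg_neg] at hD1
      have hK1 : 1 ≤ K := by omega
      refine ⟨0, K, hK1, fun m => ?_⟩
      have f1 : Vge (-K) ((D * q) 0 0) := by
        rw [hD0]
        have := hsv (-K) 0 _ (hq.vge0 0 0); rwa [add_zero] at this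
      have f2 : ((D * q) 0 0).coeff (-K) ≠ 0 := by
        rw [hD0]
        have := hsc (-K) 0 _ (hq.vge0 0 0)
        rw [add_zero] at this
        rw [this]
        exact hq.c00
      have f3 : Vge (-K) ((D * q) 0 1) := by
        rw [hD0]
        have := hsv (-K) 0 _ (hq.vge0 0 1); rwa [add_zero] at this
      have f4 : Vge (-K + 1) ((D * q) 1 0) := by
        rw [hD1]
        exact (hsv K 1 _ hq.vge1).mono (by omega)
      have f5 : Vge (-K + 1) ((D * q) 1 1) := by
        rw [hD1]
        have := hsv K 0 _ (hq.vge0 1 1)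
        rw [add_zero] at this
        exact this.mono (by omega)
      have b1 : Vge (-K) ((D * gr) 0 0) := by
        rw [hD0]
        have := hsv (-K) 0 _ (hgr.vge0 0 0); rwa [add_zero] at this
      have b2 : ((D * gr) 0 0).coeff (-K) ≠ 0 := by
        rw [hD0]
        have := hsc (-K) 0 _ (hgr.vge0 0 0)
        rw [add_zero] at this
        rw [this]
        exact hgr.c00
      have b3 : Vge (-K + 1) ((D * gr) 1 0) := by
        rw [hD1]
        exact (hsv K 1 _ hgr.vge1).mono (by omega)
      obtain ⟨S, h1, _, h3, _⟩ := growth σ hσ x gl (D * gr) (D * q) 0 1 (Or.inl ⟨rfl, rfl⟩)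
        K hE hT f1 f2 f3 f4 f5 b1 b2 b3 m
      exact ⟨S, h1, h3⟩
    · -- k ≥ 1 : take K = k, track entry (1, 1)
      refine ⟨1, k, by omega, fun m => ?_⟩
      have f1 : Vge (-k) ((D * q) 1 1) := by
        rw [hD1]
        have := hsv (-k) 0 _ (hq.vge0 1 1); rwa [add_zero] at this
      have f2 : ((D * q) 1 1).coeff (-k) ≠ 0 := by
        rw [hD1]
        have := hsc (-k) 0 _ (hq.vge0 1 1)
        rw [add_zero] at this
        rw [this]
        exact hq.c11
      have f3 : Vge (-k) ((D * q) 1 0) := by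
        rw [hD1]
        have := hsv (-k) 0 _ (hq.vge0 1 0); rwa [add_zero] at this
      have f4 : Vge (-k + 1) ((D * q) 0 1) := by
        rw [hD0]
        have := hsv k 0 _ (hq.vge0 0 1)
        rw [add_zero] at this
        exact this.mono (by omega)
      have f5 : Vge (-k + 1) ((D * q) 0 0) := by
        rw [hD0]
        have := hsv k 0 _ (hq.vge0 0 0)
        rw [add_zero] at this
        exact this.mono (by omega)
      have b1 : Vge (-k) ((D * gr) 1 1) := by
        rw [hD1]
        have := hsv (-k) 0 _ (hgr.vge0 1 1); rwa [add_zero] at this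
      have b2 : ((D * gr) 1 1).coeff (-k) ≠ 0 := by
        rw [hD1]
        have := hsc (-k) 0 _ (hgr.vge0 1 1)
        rw [add_zero] at this
        rw [this]
        exact hgr.c11
      have b3 : Vge (-k + 1) ((D * gr) 0 1) := by
        rw [hD0]
        have := hsv k 0 _ (hgr.vge0 0 1)
        rw [add_zero] at this
        exact this.mono (by omega)
      obtain ⟨S, h1, _, h3, _⟩ := growth σ hσ x gl (D * gr) (D * q) 1 0 (Or.inr ⟨rfl, rfl⟩)
        k hE hT f1 f2 f3 f4 f5 b1 b2 b3 m
      exact ⟨S, h1, h3⟩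
  obtain ⟨j, K, hK, hmain⟩ := main
  have hyu : IsUnit (x * gl).det := by
    rw [Matrix.det_mul, hx, hgl.1, one_mul]; exact isUnit_one
  set N : ℤ := mOrd (x * gl)⁻¹ + mOrd x with hN
  obtain ⟨S, hSe, hSne⟩ := hmain N.natAbs
  have hSS : S = (x * gl)⁻¹ * x.map ⇑(σ ^ (N.natAbs + 1)) := by
    rw [hSe, ← mul_assoc, Matrix.nonsing_inv_mul (x * gl) hyu, one_mul]
  have hb : Vge N (S j j) := by
    rw [hSS, mul_ent]
    have h2 : ∀ c : Fin 2, Vge (mOrd x) ((x.map ⇑(σ ^ (N.natAbs + 1))) c j) := by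
      intro c
      rw [Matrix.map_apply]
      exact (vge_mOrd x c j).sigma_pow hσ _
    exact ((vge_mOrd _ j 0).mul (h2 0)).add ((vge_mOrd _ j 1).mul (h2 1))
  have hlt : -(N.natAbs + 1 : ℤ) * K < N := by
    have h1 : ((N.natAbs : ℤ) + 1) ≤ ((N.natAbs : ℤ) + 1) * K :=
      le_mul_of_one_le_right (by positivity) hK
    have h2 : (-((N.natAbs : ℤ) + 1)) * K = -(((N.natAbs : ℤ) + 1) * K) := by ring
    rw [h2]
    omega
  exact hSne (hb _ hlt)


theorem vge_one : Vge 0 (1 : Lfield p) := by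
  rw [← single_zero_one]
  exact vge_single 0 1

theorem exists_gamma : ∃ γ : AlgebraicClosure (ZMod p), γ ^ p = γ + 1 := by
  have hp : p.Prime := Fact.out
  set P : Polynomial (AlgebraicClosure (ZMod p)) :=
    Polynomial.X ^ p - (Polynomial.X + Polynomial.C 1) with hP
  have hdeg : P.degree = p := by
    rw [hP]
    rw [Polynomial.degree_sub_eq_left_of_degree_lt]
    · exact Polynomial.degree_X_pow p
    · rw [Polynomial.degree_X_add_C (1 : AlgebraicClosure (ZMod p)), Polynomial.degree_X_pow]
      exact_mod_cast hp.one_lt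
  obtain ⟨γ, hγ⟩ := IsAlgClosed.exists_root P (by rw [hdeg]; exact_mod_cast hp.ne_zero)
  refine ⟨γ, ?_⟩
  have h := hγ
  rw [Polynomial.IsRoot.def, hP] at h
  simp only [Polynomial.eval_sub, Polynomial.eval_add, Polynomial.eval_pow,
    Polynomial.eval_X, Polynomial.eval_C] at h
  linear_combination h

theorem iwahori_upper (b : Lfield p) (hb : Vge 0 b) : InIwahori p !![1, b; 0, 1] := by
  refine ⟨by rw [Matrix.det_fin_two_of]; simp, fun i j => ?_, fun n hn => ?_⟩
  · fin_cases i <;> fin_cases j <;> intro n hn <;>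
      first
      | exact vge_one n hn
      | exact hb n hn
      | exact HahnSeries.coeff_zero
  · exact HahnSeries.coeff_zero

theorem iwahori_lower (c : Lfield p) (hc : Vge 1 c) : InIwahori p !![1, 0; c, 1] := by
  refine ⟨by rw [Matrix.det_fin_two_of]; simp, fun i j => ?_, fun n hn => ?_⟩
  · fin_cases i <;> fin_cases j <;> intro n hn <;>
      first
      | exact vge_one n hn
      | exact hc n (by omega)
      | exact HahnSeries.coeff_zero
  · exact hc n (by omega)

theorem iwahori_neg_lower (c : Lfield p) (hc : Vge 1 c) : InIwahori p !![-1, 0; c, -1] := by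
  refine ⟨by rw [Matrix.det_fin_two_of]; ring, fun i j => ?_, fun n hn => ?_⟩
  · fin_cases i <;> fin_cases j <;> intro n hn <;>
      first
      | exact vge_one.neg n hn
      | exact hc n (by omega)
      | exact HahnSeries.coeff_zero
  · exact hc n (by omega)

theorem solve_inv {x u R : Matrix (Fin 2) (Fin 2) (Lfield p)} {σ : Lfield p ≃+* Lfield p}
    (hx : x.det = 1) (hmap : x.map ⇑σ = x * u) (hdec : R = u) :
    x⁻¹ * x.map ⇑σ = R := by
  have hxu : IsUnit x.det := by rw [hx]; exact isUnit_one
  rw [hmap, ← mul_assoc, Matrix.nonsing_inv_mul x hxu, one_mul, hdec]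

end ADLVAux

open HahnSeries in
/-- for `SL₂` with `b = 1`, the chambers `C_M^i` (elements `w` of the
extended affine Weyl group) with nonempty affine Deligne–Lusztig set `X_w(σ)` — i.e.
such that some `x⁻¹ σ(x)`, `x ∈ SL₂(L)`, lies in the double `I`-coset of `C_M^i` —
are exactly `C_M = C_M^0` and the `C_M^i` with `i` odd.  Here `σ` is the Frobenius,
acting coefficientwise on `L = 𝔽̄_p((t))` by `c ↦ c^p`. -/
theorem stmt15 (p : ℕ) [Fact p.Prime]
    (σ : Lfield p ≃+* Lfield p)
    (hσ : ∀ (x : Lfield p) (n : ℤ), (σ x).coeff n = x.coeff n ^ p)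
    (i : ℤ) :
    (∃ x gl gr : Matrix (Fin 2) (Fin 2) (Lfield p),
        x.det = 1 ∧ InIwahori p gl ∧ InIwahori p gr ∧
        x⁻¹ * x.map σ = gl * chamberRep p i * gr) ↔
      (i = 0 ∨ Odd i) := by
  constructor
  · rintro ⟨x, gl, gr, hx, hgl, hgr, heq⟩
    by_contra hcon
    push_neg at hcon
    obtain ⟨h0, hodd⟩ := hcon
    exact no_even σ hσ (Int.not_odd_iff_even.mp hodd) h0 x gl gr hx hgl hgr heq
  · rintro (rfl | ⟨t, ht⟩)
    · refine ⟨1, 1, 1, Matrix.det_one, InIwahori_one, InIwahori_one, ?_⟩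
      have hrep : chamberRep p 0 = 1 := by
        rw [chamberRep_even' (k := 0) (by ring), neg_zero, _root_.single_zero_one]
        exact Matrix.one_fin_two.symm
      refine solve_inv (u := 1) Matrix.det_one ?_ ?_
      · rw [Matrix.map_one ⇑σ (map_zero σ) (_root_.map_one σ), one_mul]
      · rw [hrep, one_mul, mul_one]
    · obtain ⟨γ, hγ⟩ := exists_gamma (p := p)
      set k : ℤ := t + 1 with hk
      have hik : i = 2 * k - 1 := by omega
      have hrep := chamberRep_odd' (p := p) hik
      have hks : (single k 1 : Lfield p) * single (-k) 1 = 1 := by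
        rw [single_one_mul_single_one, add_neg_cancel]; exact _root_.single_zero_one
      have hsk : (single (-k) 1 : Lfield p) * single k 1 = 1 := by
        rw [single_one_mul_single_one, neg_add_cancel]; exact _root_.single_zero_one
      rcases le_or_gt 0 k with hk0 | hk0
      · -- k ≥ 0 : x lower unipotent
        refine ⟨!![1, 0; single (-k) γ, 1],
          !![1, single k 1; 0, 1], !![1, single k 1; 0, 1],
          by rw [Matrix.det_fin_two_of]; simp,
          iwahori_upper _ ((vge_single k 1).mono hk0),
          iwahori_upper _ ((vge_single k 1).mono hk0), ?_⟩
        refine solve_inv (u := !![1, 0; single (-k) 1, 1])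
          (by rw [Matrix.det_fin_two_of]; simp) ?_ ?_
        · refine Matrix.ext fun a b => ?_
          rw [Matrix.map_apply, mul_ent]
          fin_cases a <;> fin_cases b
          · show σ 1 = 1 * 1 + 0 * single (-k) 1
            rw [_root_.map_one]; ring
          · show σ 0 = 1 * 0 + 0 * 1
            rw [_root_.map_zero]; ring
          · show σ (single (-k) γ) = single (-k) γ * 1 + 1 * single (-k) 1
            rw [sigma_single hσ, hγ, mul_one, one_mul]
            exact (single_add_single (-k) γ 1).symm
          · show σ 1 = single (-k) γ * 0 + 1 * 1
            rw [_root_.map_one]; ring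
        · rw [hrep, Matrix.mul_fin_two, Matrix.mul_fin_two]
          refine Matrix.ext fun a b => ?_
          fin_cases a <;> fin_cases b <;>
            simp [hks, hsk]
      · -- k ≤ -1 : x upper unipotent
        refine ⟨!![1, single k γ; 0, 1],
          !![-1, 0; -single (-k) 1, -1], !![1, 0; single (-k) 1, 1],
          by rw [Matrix.det_fin_two_of]; simp,
          iwahori_neg_lower _ ((vge_single (-k) 1).mono (by omega)).neg,
          iwahori_lower _ ((vge_single (-k) 1).mono (by omega)), ?_⟩
        refine solve_inv (u := !![1, single k 1; 0, 1])
          (by rw [Matrix.det_fin_two_of]; simp) ?_ ?_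
        · refine Matrix.ext fun a b => ?_
          rw [Matrix.map_apply, mul_ent]
          fin_cases a <;> fin_cases b
          · show σ 1 = 1 * 1 + single k γ * 0
            rw [_root_.map_one]; ring
          · show σ (single k γ) = 1 * single k 1 + single k γ * 1
            rw [sigma_single hσ, hγ, mul_one, one_mul]
            rw [show γ + 1 = 1 + γ from add_comm γ 1]
            exact (single_add_single k 1 γ).symm
          · show σ 0 = 0 * 1 + 1 * 0
            rw [_root_.map_zero]; ring
          · show σ 1 = 0 * single k 1 + 1 * 1
            rw [_root_.map_one]; ring
        · rw [hrep, Matrix.mul_fin_two, Matrix.mul_fin_two]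
          refine Matrix.ext fun a b => ?_
          fin_cases a <;> fin_cases b <;>
            simp only [Fin.zero_eta, Fin.mk_one, Matrix.of_apply, Matrix.cons_val',
              Matrix.cons_val_zero, Matrix.cons_val_one, Matrix.head_cons,
              Matrix.head_fin_const, Matrix.empty_val', Matrix.cons_val_fin_one]
          · linear_combination hks
          · ring
          · linear_combination (single (-k) 1 : Lfield p) * hsk
          · linear_combination hsk
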